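/- In the shallow ANN setting with $\sigma$ discriminatory for $\mu$, let $\width \in \mathbb{N}_0$ with $\width < \mathscr{K}$ (so $\mathbf{m}_\width > 0$) and let $\theta \in \mathbb{R}^{\mathfrak{d}_\width}$ be a global minimizer, $\mathcal{L}_\width(\theta) = \mathbf{m}_\width$. Then $\mathbf{m}_{\width+1} < \mathbf{m}_\width$: the infimum risk decreases strictly when adding one hidden neuron. -/
import Mathlib


open MeasureTheory Filter Topology

noncomputable section

def cube (d : ℕ) (a b : ℝ) : Set (Fin d → ℝ) :=
  Set.Icc (fun _ => a) (fun _ => b)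

lemma widx {d H : ℕ} (i : Fin H) (j : Fin d) : i.1 * d + j.1 < d * H + 2 * H + 1 := by
  have hj := j.2
  have h1 : i.1 * d + j.1 < (i.1 + 1) * d := by rw [Nat.succ_mul]; omega
  have h2 : (i.1 + 1) * d ≤ H * d := Nat.mul_le_mul_right d i.2
  have h3 : H * d = d * H := Nat.mul_comm H d
  omega

/-- Realization function of a shallow ANN with `H` hidden neurons. -/
def srel (d H : ℕ) (σ : ℝ → ℝ) (θ : Fin (d * H + 2 * H + 1) → ℝ) (x : Fin d → ℝ) : ℝ :=
  θ ⟨d * H + 2 * H, by omega⟩ +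
    ∑ i : Fin H, θ ⟨d * H + H + i.1, by have := i.2; omega⟩ *
      σ (θ ⟨d * H + i.1, by have := i.2; omega⟩ +
        ∑ j : Fin d, θ ⟨i.1 * d + j.1, widx i j⟩ * x j)

/-- The risk (squared `L²` error against the target `f` over `[a,b]^d`). -/
def srisk (d H : ℕ) (a b : ℝ) (σ : ℝ → ℝ) (μ : Measure (Fin d → ℝ))
    (f : (Fin d → ℝ) → ℝ) (θ : Fin (d * H + 2 * H + 1) → ℝ) : ℝ :=
  ∫ x in cube d a b, (srel d H σ θ x - f x) ^ 2 ∂μ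


/-- Infimum of the risk over all parameter vectors of width `H`. -/
def sinf (d H : ℕ) (a b : ℝ) (σ : ℝ → ℝ) (μ : Measure (Fin d → ℝ))
    (f : (Fin d → ℝ) → ℝ) : ℝ :=
  ⨅ θ : Fin (d * H + 2 * H + 1) → ℝ, srisk d H a b σ μ f θ

/-- `σ` is discriminatory for the measure `μ` on `K` (Cybenko). -/
def Discriminatory (d : ℕ) (K : Set (Fin d → ℝ)) (μ : Measure (Fin d → ℝ))
    (σ : ℝ → ℝ) : Prop :=
  ∀ φ : (Fin d → ℝ) → ℝ, Measurable φ →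
    Integrable φ (μ.restrict K) →
    (∀ (w : Fin d → ℝ) (c : ℝ), ∫ x in K, σ ((∑ j, w j * x j) + c) * φ x ∂μ = 0) →
    ∫ x in K, |φ x| ∂μ = 0

end

noncomputable section
-- helpers
lemma cube_meas {d : ℕ} {a b : ℝ} : MeasurableSet (cube d a b) := measurableSet_Icc

lemma cube_nonempty {d : ℕ} {a b : ℝ} (hab : a ≤ b) : (fun _ : Fin d => a) ∈ cube d a b :=
  ⟨le_refl _, fun _ => hab⟩

lemma mem_cube_abs {d : ℕ} {a b : ℝ} {x : Fin d → ℝ} (hx : x ∈ cube d a b) (j : Fin d) :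
    |x j| ≤ |a| ⊔ |b| := by
  have h1 : a ≤ x j := hx.1 j
  have h2 : x j ≤ b := hx.2 j
  rw [abs_le]
  constructor
  · have := neg_abs_le a
    have : -(|a| ⊔ |b|) ≤ a := le_trans (neg_le_neg le_sup_left) (neg_abs_le a)
    linarith
  · exact le_trans h2 (le_trans (le_abs_self b) le_sup_right)

lemma srisk_nonneg {d H : ℕ} {a b : ℝ} {σ : ℝ → ℝ} {μ : Measure (Fin d → ℝ)}
    {f : (Fin d → ℝ) → ℝ} (θ : Fin (d * H + 2 * H + 1) → ℝ) :
    0 ≤ srisk d H a b σ μ f θ :=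
  integral_nonneg fun x => sq_nonneg _

lemma sinf_le {d H : ℕ} {a b : ℝ} {σ : ℝ → ℝ} {μ : Measure (Fin d → ℝ)}
    {f : (Fin d → ℝ) → ℝ} (θ : Fin (d * H + 2 * H + 1) → ℝ) :
    sinf d H a b σ μ f ≤ srisk d H a b σ μ f θ :=
  ciInf_le ⟨0, by rintro y ⟨θ', rfl⟩; exact srisk_nonneg θ'⟩ θ

lemma srel_measurable {d H : ℕ} {σ : ℝ → ℝ} (hσm : Measurable σ)
    (θ : Fin (d * H + 2 * H + 1) → ℝ) : Measurable (srel d H σ θ) := by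
  unfold srel
  apply measurable_const.add
  apply Finset.measurable_sum
  intro i _
  exact ((hσm.comp (measurable_const.add
    (Finset.measurable_sum _ fun j _ => (measurable_pi_apply j).const_mul _))).const_mul _)

lemma srel_bounded {d H : ℕ} (a b : ℝ) {σ : ℝ → ℝ}
    (hσb : ∀ r : ℝ, ∃ C, ∀ y : ℝ, |y| ≤ r → |σ y| ≤ C)
    (θ : Fin (d * H + 2 * H + 1) → ℝ) :
    ∃ C, ∀ x ∈ cube d a b, |srel d H σ θ x| ≤ C := by
  set r := |a| ⊔ |b| with hr
  have hr0 : 0 ≤ r := le_trans (abs_nonneg a) le_sup_left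
  set T := ∑ k : Fin (d * H + 2 * H + 1), |θ k| with hT
  have hT0 : 0 ≤ T := Finset.sum_nonneg fun k _ => abs_nonneg _
  have hTk : ∀ k, |θ k| ≤ T := fun k =>
    Finset.single_le_sum (fun k _ => abs_nonneg (θ k)) (Finset.mem_univ k)
  obtain ⟨C0, hC0⟩ := hσb (T + d * (T * r))
  have hC00 : 0 ≤ C0 :=
    le_trans (abs_nonneg (σ 0)) (hC0 0 (by rw [abs_zero]; positivity))
  refine ⟨T + H * (T * C0), fun x hx => ?_⟩
  have hxj : ∀ j, |x j| ≤ r := fun j => mem_cube_abs hx j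
  unfold srel
  refine le_trans (abs_add_le _ _) ?_
  refine add_le_add (hTk _) ?_
  refine le_trans (Finset.abs_sum_le_sum_abs _ _) ?_
  have hterm : ∀ i : Fin H,
      |θ ⟨d * H + H + i.1, by have := i.2; omega⟩ *
        σ (θ ⟨d * H + i.1, by have := i.2; omega⟩ +
          ∑ j : Fin d, θ ⟨i.1 * d + j.1, widx i j⟩ * x j)| ≤ T * C0 := by
    intro i
    rw [abs_mul]
    refine mul_le_mul (hTk _) ?_ (abs_nonneg _) hT0
    refine hC0 _ ?_
    refine le_trans (abs_add_le _ _) (add_le_add (hTk _) ?_)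
    refine le_trans (Finset.abs_sum_le_sum_abs _ _) ?_
    have : ∀ j : Fin d, |θ ⟨i.1 * d + j.1, widx i j⟩ * x j| ≤ T * r := by
      intro j
      rw [abs_mul]
      exact mul_le_mul (hTk _) (hxj j) (abs_nonneg _) hT0
    refine le_trans (Finset.sum_le_sum fun j _ => this j) ?_
    rw [Finset.sum_const, Finset.card_univ, Fintype.card_fin, nsmul_eq_mul]
  refine le_trans (Finset.sum_le_sum fun i _ => hterm i) ?_
  rw [Finset.sum_const, Finset.card_univ, Fintype.card_fin, nsmul_eq_mul]

lemma integrable_of_bdd {d : ℕ} {a b : ℝ} {μ : Measure (Fin d → ℝ)} [IsFiniteMeasure μ]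
    {h : (Fin d → ℝ) → ℝ} (hm : Measurable h) {C : ℝ}
    (hb : ∀ x ∈ cube d a b, |h x| ≤ C) : Integrable h (μ.restrict (cube d a b)) := by
  refine Integrable.mono' (integrable_const C) hm.aestronglyMeasurable ?_
  exact (ae_restrict_iff' cube_meas).2 (Filter.Eventually.of_forall fun x hx => by
    simpa [Real.norm_eq_abs] using hb x hx)

lemma widx' {d H : ℕ} (i : Fin H) (j : Fin d) : i.1 * d + j.1 < d * H := by
  have hj := j.2
  have h1 : i.1 * d + j.1 < (i.1 + 1) * d := by rw [Nat.succ_mul]; omega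
  have h2 : (i.1 + 1) * d ≤ H * d := Nat.mul_le_mul_right d i.2
  have h3 : H * d = d * H := Nat.mul_comm H d
  omega

lemma dimsucc (d H : ℕ) : d * (H+1) + 2 * (H+1) + 1 = d * H + d + 2 * H + 3 := by
  have : d * (H+1) = d * H + d := Nat.mul_succ d H
  omega

noncomputable def extendParam (d H : ℕ) (θ : Fin (d * H + 2 * H + 1) → ℝ)
    (w : Fin d → ℝ) (c v : ℝ) : Fin (d * (H+1) + 2 * (H+1) + 1) → ℝ := fun k =>
  if h1 : k.1 < d * H then θ ⟨k.1, by omega⟩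
  else if h2 : k.1 < d * H + d then w ⟨k.1 - d * H, by omega⟩
  else if h3 : k.1 < d * H + d + H then θ ⟨k.1 - d, by omega⟩
  else if h4 : k.1 = d * H + d + H then c
  else if h5 : k.1 < d * H + d + 2 * H + 1 then θ ⟨k.1 - d - 1, by omega⟩
  else if h6 : k.1 = d * H + d + 2 * H + 1 then v
  else θ ⟨d * H + 2 * H, by omega⟩

lemma srel_extend (d H : ℕ) (σ : ℝ → ℝ) (θ : Fin (d * H + 2 * H + 1) → ℝ)
    (w : Fin d → ℝ) (c v : ℝ) (x : Fin d → ℝ) :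
    srel d (H+1) σ (extendParam d H θ w c v) x
      = srel d H σ θ x + v * σ (c + ∑ j, w j * x j) := by
  have hds : d * (H+1) = d * H + d := Nat.mul_succ d H
  unfold srel
  rw [Fin.sum_univ_castSucc]
  have hb : extendParam d H θ w c v ⟨d * (H+1) + 2 * (H+1), by omega⟩
      = θ ⟨d * H + 2 * H, by omega⟩ := by
    unfold extendParam
    simp only [Fin.val_mk]
    rw [dif_neg (by omega), dif_neg (by omega), dif_neg (by omega), dif_neg (by omega),
      dif_neg (by omega), dif_neg (by omega)]
  have hlastout : extendParam d H θ w c v ⟨d * (H+1) + (H+1) + (Fin.last H).1, by omega⟩ = v := by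
    unfold extendParam
    simp only [Fin.val_mk]
    simp only [Fin.val_last]
    rw [dif_neg (by omega), dif_neg (by omega), dif_neg (by omega), dif_neg (by omega),
      dif_neg (by omega), dif_pos (by omega)]
  have hlastbias : extendParam d H θ w c v ⟨d * (H+1) + (Fin.last H).1, by omega⟩ = c := by
    unfold extendParam
    simp only [Fin.val_mk]
    simp only [Fin.val_last]
    rw [dif_neg (by omega), dif_neg (by omega), dif_neg (by omega), dif_pos (by omega)]
  have hlastinner : ∀ j : Fin d,
      extendParam d H θ w c v ⟨(Fin.last H).1 * d + j.1, widx (Fin.last H) j⟩ = w j := by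
    intro j
    have hj := j.2
    have hHd : (Fin.last H).1 * d = H * d := rfl
    have h3 : H * d = d * H := Nat.mul_comm H d
    unfold extendParam
    simp only [Fin.val_mk]
    rw [dif_neg (by simp only [Fin.val_last]; omega), dif_pos (by simp only [Fin.val_last]; omega)]
    congr 1
    apply Fin.ext
    simp only [Fin.val_last]
    omega
  rw [hb, hlastout, hlastbias]
  have hsum : ∀ i : Fin H,
      extendParam d H θ w c v ⟨d * (H+1) + (H+1) + (Fin.castSucc i).1, by have := i.2; omega⟩ *
        σ (extendParam d H θ w c v ⟨d * (H+1) + (Fin.castSucc i).1, by have := i.2; omega⟩ +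
          ∑ j : Fin d, extendParam d H θ w c v
            ⟨(Fin.castSucc i).1 * d + j.1, widx (Fin.castSucc i) j⟩ * x j)
      = θ ⟨d * H + H + i.1, by have := i.2; omega⟩ *
        σ (θ ⟨d * H + i.1, by have := i.2; omega⟩ +
          ∑ j : Fin d, θ ⟨i.1 * d + j.1, widx i j⟩ * x j) := by
    intro i
    have hi := i.2
    have hout : extendParam d H θ w c v ⟨d * (H+1) + (H+1) + (Fin.castSucc i).1, by omega⟩
        = θ ⟨d * H + H + i.1, by omega⟩ := by
      unfold extendParam
      simp only [Fin.val_mk]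
      simp only [Fin.coe_castSucc]
      rw [dif_neg (by omega), dif_neg (by omega), dif_neg (by omega), dif_neg (by omega),
        dif_pos (by omega)]
      congr 1
      apply Fin.ext
      simp only
      omega
    have hbias : extendParam d H θ w c v ⟨d * (H+1) + (Fin.castSucc i).1, by omega⟩
        = θ ⟨d * H + i.1, by omega⟩ := by
      unfold extendParam
      simp only [Fin.val_mk]
      simp only [Fin.coe_castSucc]
      rw [dif_neg (by omega), dif_neg (by omega), dif_pos (by omega)]
      congr 1
      apply Fin.ext
      simp only
      omega
    have hinner : ∀ j : Fin d,
        extendParam d H θ w c v ⟨(Fin.castSucc i).1 * d + j.1, widx (Fin.castSucc i) j⟩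
          = θ ⟨i.1 * d + j.1, widx i j⟩ := by
      intro j
      have := widx' i j
      unfold extendParam
      simp only [Fin.val_mk]
      simp only [Fin.coe_castSucc]
      rw [dif_pos (by omega)]
    rw [hout, hbias]
    simp only [hinner]
  have : (∑ i : Fin H,
      extendParam d H θ w c v ⟨d * (H+1) + (H+1) + (Fin.castSucc i).1, by have := i.2; omega⟩ *
        σ (extendParam d H θ w c v ⟨d * (H+1) + (Fin.castSucc i).1, by have := i.2; omega⟩ +
          ∑ j : Fin d, extendParam d H θ w c v
            ⟨(Fin.castSucc i).1 * d + j.1, widx (Fin.castSucc i) j⟩ * x j))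
      = ∑ i : Fin H, θ ⟨d * H + H + i.1, by have := i.2; omega⟩ *
        σ (θ ⟨d * H + i.1, by have := i.2; omega⟩ +
          ∑ j : Fin d, θ ⟨i.1 * d + j.1, widx i j⟩ * x j) :=
    Finset.sum_congr rfl fun i _ => hsum i
  rw [this]
  simp only [hlastinner]
  ring


end

/-- Below the width `𝒦` at which zero risk first becomes attainable, the infimum of
the risk decreases strictly when one hidden neuron is added, provided a global
minimizer of the width-`H` risk exists. -/
theorem stmt10 (d : ℕ) (hd : 0 < d) (a b : ℝ) (hab : a ≤ b)
    (μ : Measure (Fin d → ℝ)) [IsFiniteMeasure μ]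
    (f : (Fin d → ℝ) → ℝ) (hf : Measurable f) (hfb : ∃ C, ∀ x, |f x| ≤ C)
    (σ : ℝ → ℝ) (hσm : Measurable σ)
    (hσb : ∀ r : ℝ, ∃ C, ∀ y : ℝ, |y| ≤ r → |σ y| ≤ C)
    (hdisc : Discriminatory d (cube d a b) μ σ)
    (H : ℕ) (hHK : ∀ k : ℕ, k ≤ H → sinf d k a b σ μ f ≠ 0)
    (θ : Fin (d * H + 2 * H + 1) → ℝ)
    (hθ : srisk d H a b σ μ f θ = sinf d H a b σ μ f) :
    sinf d (H + 1) a b σ μ f < sinf d H a b σ μ f := by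
  classical
  obtain ⟨Cf, hCf⟩ := hfb
  obtain ⟨Cs, hCs⟩ := srel_bounded a b hσb θ
  set φ : (Fin d → ℝ) → ℝ := fun x => srel d H σ θ x - f x with hφ
  have hφm : Measurable φ := (srel_measurable hσm θ).sub hf
  have hφb : ∀ x ∈ cube d a b, |φ x| ≤ Cs + Cf := fun x hx =>
    le_trans (abs_sub _ _) (add_le_add (hCs x hx) (hCf x))
  have hφint : Integrable φ (μ.restrict (cube d a b)) := integrable_of_bdd hφm hφb
  have hriskφ : srisk d H a b σ μ f θ = ∫ x in cube d a b, (φ x) ^ 2 ∂μ := rfl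
  have hm0 : 0 < srisk d H a b σ μ f θ := by
    refine lt_of_le_of_ne (srisk_nonneg θ) fun h => ?_
    exact hHK H le_rfl (hθ ▸ h.symm)
  -- find a discriminating direction
  have hexists : ∃ (w : Fin d → ℝ) (c : ℝ),
      (∫ x in cube d a b, σ ((∑ j, w j * x j) + c) * φ x ∂μ) ≠ 0 := by
    by_contra hcon
    push_neg at hcon
    have habs := hdisc φ hφm hφint fun w c => hcon w c
    have hintabs : Integrable (fun x => |φ x|) (μ.restrict (cube d a b)) := hφint.abs
    have h0 : (fun x => |φ x|) =ᵐ[μ.restrict (cube d a b)] 0 :=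
      (integral_eq_zero_iff_of_nonneg (fun x => abs_nonneg _) hintabs).1 habs
    have hφ0 : ∀ᵐ x ∂(μ.restrict (cube d a b)), φ x = 0 :=
      h0.mono fun x hx => abs_eq_zero.1 hx
    have hsq0 : (fun x => (φ x) ^ 2) =ᵐ[μ.restrict (cube d a b)] (fun _ => (0 : ℝ)) :=
      hφ0.mono fun x hx => by simp [hx]
    have : srisk d H a b σ μ f θ = 0 := by
      rw [hriskφ, integral_congr_ae hsq0, integral_zero]
    exact hm0.ne' this
  obtain ⟨w, c, hwc⟩ := hexists
  set g : (Fin d → ℝ) → ℝ := fun x => σ ((∑ j, w j * x j) + c) with hg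
  have hgm : Measurable g := hσm.comp
    ((Finset.measurable_sum _ fun j _ => (measurable_pi_apply j).const_mul _).add_const c)
  have hgb : ∃ Cg, ∀ x ∈ cube d a b, |g x| ≤ Cg := by
    set r := |a| ⊔ |b| with hr
    set W := ∑ j : Fin d, |w j| with hW
    have hW0 : 0 ≤ W := Finset.sum_nonneg fun j _ => abs_nonneg _
    obtain ⟨Cg, hCg⟩ := hσb (W * r + |c|)
    refine ⟨Cg, fun x hx => hCg _ ?_⟩
    refine le_trans (abs_add_le _ _) (add_le_add ?_ le_rfl)
    refine le_trans (Finset.abs_sum_le_sum_abs _ _) ?_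
    have : ∀ j : Fin d, |w j * x j| ≤ |w j| * r := fun j => by
      rw [abs_mul]
      exact mul_le_mul_of_nonneg_left (mem_cube_abs hx j) (abs_nonneg _)
    refine le_trans (Finset.sum_le_sum fun j _ => this j) ?_
    rw [← Finset.sum_mul]
  obtain ⟨Cg, hCgb⟩ := hgb
  have hCg0 : 0 ≤ Cg := le_trans (abs_nonneg _) (hCgb _ (cube_nonempty hab))
  have hφb0 : 0 ≤ Cs + Cf := le_trans (abs_nonneg _) (hφb _ (cube_nonempty hab))
  set A := ∫ x in cube d a b, (φ x) ^ 2 ∂μ with hA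
  set B := ∫ x in cube d a b, g x * φ x ∂μ with hB
  set S := ∫ x in cube d a b, (g x) ^ 2 ∂μ with hS
  have hwc' : B ≠ 0 := hwc
  have hS0 : 0 ≤ S := integral_nonneg fun x => sq_nonneg _
  set v : ℝ := -B / (S + 1) with hv
  have hint1 : Integrable (fun x => (φ x) ^ 2) (μ.restrict (cube d a b)) := by
    refine integrable_of_bdd (hφm.pow_const 2) (C := (Cs + Cf) ^ 2) fun x hx => ?_
    rw [abs_pow]
    exact pow_le_pow_left₀ (abs_nonneg _) (hφb x hx) 2
  have hint2 : Integrable (fun x => g x * φ x) (μ.restrict (cube d a b)) := by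
    refine integrable_of_bdd (hgm.mul hφm) (C := Cg * (Cs + Cf)) fun x hx => ?_
    rw [abs_mul]
    exact mul_le_mul (hCgb x hx) (hφb x hx) (abs_nonneg _) hCg0
  have hint3 : Integrable (fun x => (g x) ^ 2) (μ.restrict (cube d a b)) := by
    refine integrable_of_bdd (hgm.pow_const 2) (C := Cg ^ 2) fun x hx => ?_
    rw [abs_pow]
    exact pow_le_pow_left₀ (abs_nonneg _) (hCgb x hx) 2
  have hexp : srisk d (H + 1) a b σ μ f (extendParam d H θ w c v)
      = A + (2 * v) * B + v ^ 2 * S := by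
    have hptw : ∀ x : Fin d → ℝ,
        (srel d (H + 1) σ (extendParam d H θ w c v) x - f x) ^ 2
          = (φ x) ^ 2 + (2 * v) * (g x * φ x) + v ^ 2 * (g x) ^ 2 := by
      intro x
      rw [srel_extend]
      simp only [hφ, hg]
      rw [show c + ∑ j, w j * x j = (∑ j, w j * x j) + c from add_comm _ _]
      ring
    unfold srisk
    rw [integral_congr_ae (Filter.Eventually.of_forall fun x => hptw x)]
    have e1 : (∫ x in cube d a b,
        ((φ x) ^ 2 + (2 * v) * (g x * φ x) + v ^ 2 * (g x) ^ 2) ∂μ)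
        = (∫ x in cube d a b, ((φ x) ^ 2 + (2 * v) * (g x * φ x)) ∂μ)
          + ∫ x in cube d a b, v ^ 2 * (g x) ^ 2 ∂μ :=
      integral_add (hint1.add (hint2.const_mul _)) (hint3.const_mul _)
    have e2 : (∫ x in cube d a b, ((φ x) ^ 2 + (2 * v) * (g x * φ x)) ∂μ)
        = (∫ x in cube d a b, (φ x) ^ 2 ∂μ)
          + ∫ x in cube d a b, (2 * v) * (g x * φ x) ∂μ :=
      integral_add hint1 (hint2.const_mul _)
    rw [e1, e2, integral_const_mul, integral_const_mul]
  have hB2 : 0 < B ^ 2 := lt_of_le_of_ne (sq_nonneg B) (Ne.symm (pow_ne_zero 2 hwc'))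
  have hlt : A + (2 * v) * B + v ^ 2 * S < A := by
    have h1 : (2 * v) * B + v ^ 2 * S = -(B ^ 2 * (S + 2)) / (S + 1) ^ 2 := by
      rw [hv]
      field_simp
      ring
    have h2 : -(B ^ 2 * (S + 2)) / (S + 1) ^ 2 < 0 := by
      apply div_neg_of_neg_of_pos
      · nlinarith
      · positivity
    linarith [h1 ▸ h2]
  calc sinf d (H + 1) a b σ μ f
      ≤ srisk d (H + 1) a b σ μ f (extendParam d H θ w c v) := sinf_le _
    _ = A + (2 * v) * B + v ^ 2 * S := hexp
    _ < A := hlt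
    _ = sinf d H a b σ μ f := by rw [← hriskφ, hθ]
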